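/- In the λG-calculus, the full simplification of a typable term t is a normal form reachable from t: t →g* simpfull(t) and simpfull(t) contains no redexes. -/

import Mathlib

namespace LambdaG

/-- Simple types: base types and arrow types. -/
inductive Ty : Type
  | base : ℕ → Ty
  | arr : Ty → Ty → Ty
deriving DecidableEq

/-- The height of a type. -/
def Ty.height : Ty → ℕ
  | .base _ => 0
  | .arr A B => 1 + max A.height B.height

/-- Terms of the λG-calculus: simply typed λ-terms extended with wrappers `⟨t | s⟩`. -/
inductive GTm : Type
  | var : ℕ → Ty → GTm
  | lam : ℕ → Ty → GTm → GTm
  | app : GTm → GTm → GTm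
  | wrap : GTm → GTm → GTm
deriving DecidableEq

/-- Capture-avoiding substitution `t[x^B := s]` (bound variables assumed suitably renamed). -/
def GTm.subst : GTm → ℕ → Ty → GTm → GTm
  | .var y C, x, B, s => if y = x ∧ C = B then s else .var y C
  | .lam y C t, x, B, s =>
      if y = x ∧ C = B then .lam y C t else .lam y C (t.subst x B s)
  | .app t u, x, B, s => .app (t.subst x B s) (u.subst x B s)
  | .wrap t u, x, B, s => .wrap (t.subst x B s) (u.subst x B s)

/-- `t L`: append the memorized terms of the memory `L` to `t` as wrappers. -/
def GTm.appMem (t : GTm) (L : List GTm) : GTm := L.foldl GTm.wrap t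

/-- The (unique) type of a λG-term, if typable.  A wrapper has the type of its body. -/
def GTm.typeof : GTm → Option Ty
  | .var _ A => some A
  | .lam _ A t => (t.typeof).map (Ty.arr A)
  | .app t u =>
      match t.typeof, u.typeof with
      | some (.arr A B), some A' => if A = A' then some B else none
      | _, _ => none
  | .wrap t u =>
      match t.typeof, u.typeof with
      | some A, some _ => some A
      | _, _ => none

/-- Whether a term is an m-abstraction, i.e. of the form `(λx.t)L`. -/
def GTm.headIsLam : GTm → Bool
  | .lam _ _ _ => true
  | .wrap t _ => t.headIsLam
  | _ => false

/-- The degree of an m-abstraction: the height of its type (`none` for non-m-abstractions). -/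
def GTm.mAbsDegree (t : GTm) : Option ℕ :=
  if t.headIsLam then t.typeof.map Ty.height else none

/-- Reduction in the λG-calculus: contextual closure of
`(λx.t)L s →g ⟨t[x := s] | s⟩L`. -/
inductive GStep : GTm → GTm → Prop
  | beta (x : ℕ) (A : Ty) (t : GTm) (L : List GTm) (s : GTm) :
      GStep (GTm.app (GTm.appMem (GTm.lam x A t) L) s)
            (GTm.appMem (GTm.wrap (t.subst x A s) s) L)
  | lam (x : ℕ) (A : Ty) {t t' : GTm} : GStep t t' →
      GStep (GTm.lam x A t) (GTm.lam x A t')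
  | appL {t t' : GTm} (s : GTm) : GStep t t' → GStep (GTm.app t s) (GTm.app t' s)
  | appR (t : GTm) {s s' : GTm} : GStep s s' → GStep (GTm.app t s) (GTm.app t s')
  | wrapL {t t' : GTm} (s : GTm) : GStep t t' → GStep (GTm.wrap t s) (GTm.wrap t' s)
  | wrapR (t : GTm) {s s' : GTm} : GStep s s' → GStep (GTm.wrap t s) (GTm.wrap t s')

/-- Reduction of degree `d`: contraction of redexes whose m-abstraction has degree `d`. -/
inductive GStepD (d : ℕ) : GTm → GTm → Prop
  | beta (x : ℕ) (A : Ty) (t : GTm) (L : List GTm) (s : GTm)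
      (hdeg : (GTm.appMem (GTm.lam x A t) L).mAbsDegree = some d) :
      GStepD d (GTm.app (GTm.appMem (GTm.lam x A t) L) s)
               (GTm.appMem (GTm.wrap (t.subst x A s) s) L)
  | lam (x : ℕ) (A : Ty) {t t' : GTm} : GStepD d t t' →
      GStepD d (GTm.lam x A t) (GTm.lam x A t')
  | appL {t t' : GTm} (s : GTm) : GStepD d t t' → GStepD d (GTm.app t s) (GTm.app t' s)
  | appR (t : GTm) {s s' : GTm} : GStepD d s s' → GStepD d (GTm.app t s) (GTm.app t s')
  | wrapL {t t' : GTm} (s : GTm) : GStepD d t t' → GStepD d (GTm.wrap t s) (GTm.wrap t' s)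
  | wrapR (t : GTm) {s s' : GTm} : GStepD d s s' → GStepD d (GTm.wrap t s) (GTm.wrap t s')

/-- Forgetful reduction: contextual closure of `⟨t | s⟩ ▷ t`. -/
inductive GForget : GTm → GTm → Prop
  | drop (t s : GTm) : GForget (GTm.wrap t s) t
  | lam (x : ℕ) (A : Ty) {t t' : GTm} : GForget t t' →
      GForget (GTm.lam x A t) (GTm.lam x A t')
  | appL {t t' : GTm} (s : GTm) : GForget t t' → GForget (GTm.app t s) (GTm.app t' s)
  | appR (t : GTm) {s s' : GTm} : GForget s s' → GForget (GTm.app t s) (GTm.app t s')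
  | wrapL {t t' : GTm} (s : GTm) : GForget t t' → GForget (GTm.wrap t s) (GTm.wrap t' s)
  | wrapR (t : GTm) {s s' : GTm} : GForget s s' → GForget (GTm.wrap t s) (GTm.wrap t s')

/-- Typing judgments `Γ ⊢ t : A` of the λG-calculus. -/
inductive GHasType : (ℕ → Option Ty) → GTm → Ty → Prop
  | var {Γ : ℕ → Option Ty} {x : ℕ} {A : Ty} :
      Γ x = some A → GHasType Γ (GTm.var x A) A
  | lam {Γ : ℕ → Option Ty} {x : ℕ} {A : Ty} {t : GTm} {B : Ty} :
      GHasType (Function.update Γ x (some A)) t B →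
      GHasType Γ (GTm.lam x A t) (Ty.arr A B)
  | app {Γ : ℕ → Option Ty} {t s : GTm} {A B : Ty} :
      GHasType Γ t (Ty.arr A B) → GHasType Γ s A → GHasType Γ (GTm.app t s) B
  | wrap {Γ : ℕ → Option Ty} {t s : GTm} {A B : Ty} :
      GHasType Γ t A → GHasType Γ s B → GHasType Γ (GTm.wrap t s) A

/-- Decompose an m-abstraction `(λx.t)L` into its abstraction and memory. -/
def GTm.decomp : GTm → Option ((ℕ × Ty × GTm) × List GTm)
  | .lam x A t => some ((x, A, t), [])
  | .wrap t s => (t.decomp).map (fun p => (p.1, p.2 ++ [s]))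
  | _ => none

/-- Simplification of degree `d`: the complete development of all redexes of degree `d`. -/
def GTm.simpD (d : ℕ) : GTm → GTm
  | .var y A => .var y A
  | .lam y A t => .lam y A (t.simpD d)
  | .wrap t s => .wrap (t.simpD d) (s.simpD d)
  | .app t s =>
      if t.mAbsDegree = some d then
        match (t.simpD d).decomp with
        | some ((x, A, b), L) =>
            GTm.appMem (GTm.wrap (b.subst x A (s.simpD d)) (s.simpD d)) L
        | none => .app (t.simpD d) (s.simpD d)
      else .app (t.simpD d) (s.simpD d)

/-- The max-degree of a term: the maximum degree of its redexes, or `0` if none. -/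
def GTm.maxdeg : GTm → ℕ
  | .var _ _ => 0
  | .lam _ _ t => t.maxdeg
  | .wrap t s => max t.maxdeg s.maxdeg
  | .app t s => max (max t.maxdeg s.maxdeg) ((t.mAbsDegree).getD 0)

/-- Iterated simplification `simp_1(⋯ simp_D(t))`. -/
def GTm.simpDown : ℕ → GTm → GTm
  | 0, t => t
  | d + 1, t => GTm.simpDown d (t.simpD (d + 1))

/-- Full simplification: `simpfull(t) = simp_1(simp_2(⋯ simp_D(t)))` where `D = maxdeg t`. -/
def GTm.simpfull (t : GTm) : GTm := GTm.simpDown t.maxdeg t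

/-- The weight of a term: its number of wrappers. -/
def GTm.weight : GTm → ℕ
  | .var _ _ => 0
  | .lam _ _ t => t.weight
  | .app t s => t.weight + s.weight
  | .wrap t s => t.weight + s.weight + 1


/-! ### Auxiliary lemmas -/

open Relation

lemma appMem_concat (u s : GTm) (L : List GTm) :
    GTm.appMem u (L ++ [s]) = GTm.wrap (GTm.appMem u L) s := by
  simp [GTm.appMem]

lemma typeof_of_hasType {Γ : ℕ → Option Ty} {t : GTm} {A : Ty}
    (h : GHasType Γ t A) : t.typeof = some A := by
  induction h with
  | var h => rfl
  | lam h ih => simp [GTm.typeof, ih]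
  | app h1 h2 ih1 ih2 => simp [GTm.typeof, ih1, ih2]
  | wrap h1 h2 ih1 ih2 => simp [GTm.typeof, ih1, ih2]

lemma typeof_app_inv {u v : GTm} {C : Ty} (h : (GTm.app u v).typeof = some C) :
    ∃ A, u.typeof = some (Ty.arr A C) ∧ v.typeof = some A := by
  cases hu : u.typeof with
  | none => simp [GTm.typeof, hu] at h
  | some T =>
    cases T with
    | base n =>
      cases hv : v.typeof <;> simp [GTm.typeof, hu, hv] at h
    | arr A B =>
      cases hv : v.typeof with
      | none => simp [GTm.typeof, hu, hv] at h
      | some A' =>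
        simp [GTm.typeof, hu, hv] at h
        obtain ⟨rfl, rfl⟩ := h
        exact ⟨A, rfl, rfl⟩

lemma typeof_wrap_inv {u v : GTm} {C : Ty} (h : (GTm.wrap u v).typeof = some C) :
    u.typeof = some C ∧ (v.typeof).isSome := by
  cases hu : u.typeof with
  | none => simp [GTm.typeof, hu] at h
  | some X =>
    cases hv : v.typeof with
    | none => simp [GTm.typeof, hu, hv] at h
    | some Y =>
      simp [GTm.typeof, hu, hv] at h
      exact ⟨by rw [h], rfl⟩

lemma typeof_lam_inv {x : ℕ} {A : Ty} {t : GTm} {C : Ty}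
    (h : (GTm.lam x A t).typeof = some C) :
    ∃ B, t.typeof = some B ∧ C = Ty.arr A B := by
  cases ht : t.typeof with
  | none => simp [GTm.typeof, ht] at h
  | some B => simp [GTm.typeof, ht] at h; exact ⟨B, rfl, h.symm⟩

lemma typeof_wrap_eq {u v : GTm} (hv : (v.typeof).isSome) :
    (GTm.wrap u v).typeof = u.typeof := by
  obtain ⟨D, hD⟩ := Option.isSome_iff_exists.mp hv
  cases hu : u.typeof <;> simp [GTm.typeof, hu, hD]

lemma decomp_eq : ∀ {t : GTm} {x : ℕ} {A : Ty} {b : GTm} {L : List GTm},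
    t.decomp = some ((x, A, b), L) → t = GTm.appMem (GTm.lam x A b) L := by
  intro t
  induction t with
  | var y B => intro x A b L h; simp [GTm.decomp] at h
  | lam y B u _ =>
    intro x A b L h
    simp [GTm.decomp] at h
    obtain ⟨⟨h1, h2, h3⟩, h4⟩ := h
    subst h1; subst h2; subst h3; subst h4; rfl
  | app u v _ _ => intro x A b L h; simp [GTm.decomp] at h
  | wrap u v ih _ =>
    intro x A b L h
    rw [show (GTm.wrap u v).decomp = (u.decomp).map (fun p => (p.1, p.2 ++ [v])) from rfl] at h
    obtain ⟨⟨⟨x', A', b'⟩, L'⟩, hp, heq⟩ := Option.map_eq_some_iff.mp h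
    simp only [Prod.mk.injEq] at heq
    obtain ⟨⟨h1, h2, h3⟩, h4⟩ := heq
    subst h1; subst h2; subst h3; subst h4
    rw [ih hp, appMem_concat]

lemma headIsLam_decomp : ∀ {t : GTm}, t.headIsLam = true → ∃ p, t.decomp = some p := by
  intro t
  induction t with
  | var y B => intro h; simp [GTm.headIsLam] at h
  | lam y B u _ => intro _; exact ⟨((y, B, u), []), rfl⟩
  | app u v _ _ => intro h; simp [GTm.headIsLam] at h
  | wrap u v ih _ =>
    intro h
    obtain ⟨p, hp⟩ := ih h
    exact ⟨(p.1, p.2 ++ [v]), by simp [GTm.decomp, hp]⟩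

lemma headIsLam_appMem : ∀ (L : List GTm) (u : GTm),
    (GTm.appMem u L).headIsLam = u.headIsLam := by
  intro L
  induction L with
  | nil => intro u; rfl
  | cons a L ih => intro u; exact (ih (GTm.wrap u a)).trans rfl

lemma typeof_appMem_isSome : ∀ (L : List GTm) (u : GTm),
    (∀ l ∈ L, (l.typeof).isSome) → (GTm.appMem u L).typeof = u.typeof := by
  intro L
  induction L with
  | nil => intro u _; rfl
  | cons a L ih =>
    intro u h
    have : (GTm.appMem (GTm.wrap u a) L).typeof = (GTm.wrap u a).typeof :=
      ih _ (fun l hl => h l (List.mem_cons_of_mem _ hl))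
    rw [show GTm.appMem u (a :: L) = GTm.appMem (GTm.wrap u a) L from rfl, this,
      typeof_wrap_eq (h a List.mem_cons_self)]

lemma typeof_appMem_inv : ∀ (L : List GTm) (u : GTm) {C : Ty},
    (GTm.appMem u L).typeof = some C →
    u.typeof = some C ∧ ∀ l ∈ L, (l.typeof).isSome := by
  intro L
  induction L with
  | nil => intro u C h; exact ⟨h, by simp⟩
  | cons a L ih =>
    intro u C h
    obtain ⟨hw, hL⟩ := ih (GTm.wrap u a) h
    obtain ⟨hu, ha⟩ := typeof_wrap_inv hw
    refine ⟨hu, ?_⟩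
    intro l hl
    rcases List.mem_cons.mp hl with h' | h'
    · subst h'; exact ha
    · exact hL l h'

lemma maxdeg_appMem : ∀ (L : List GTm) (u : GTm),
    (GTm.appMem u L).maxdeg = max u.maxdeg ((L.map GTm.maxdeg).foldr max 0) := by
  intro L
  induction L with
  | nil => intro u; simp [GTm.appMem]
  | cons a L ih =>
    intro u
    rw [show GTm.appMem u (a :: L) = GTm.appMem (GTm.wrap u a) L from rfl, ih]
    simp [GTm.maxdeg]

lemma typeof_subst {x : ℕ} {B : Ty} {s : GTm} (hs : s.typeof = some B) :
    ∀ {t : GTm} {C : Ty}, t.typeof = some C → (t.subst x B s).typeof = some C := by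
  intro t
  induction t with
  | var y D =>
    intro C ht
    simp [GTm.typeof] at ht
    subst ht
    by_cases h : y = x ∧ D = B
    · simp [GTm.subst, h, hs, h.2]
    · simp [GTm.subst, h, GTm.typeof]
  | lam y D u ih =>
    intro C ht
    obtain ⟨B', hu, hC⟩ := typeof_lam_inv ht
    subst hC
    by_cases h : y = x ∧ D = B
    · simpa [GTm.subst, h] using ht
    · simp [GTm.subst, h, GTm.typeof, ih hu]
  | app u v ihu ihv =>
    intro C ht
    obtain ⟨A, hu, hv⟩ := typeof_app_inv ht
    simp [GTm.subst, GTm.typeof, ihu hu, ihv hv]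
  | wrap u v ihu ihv =>
    intro C ht
    obtain ⟨hu, hv⟩ := typeof_wrap_inv ht
    obtain ⟨D, hD⟩ := Option.isSome_iff_exists.mp hv
    simp [GTm.subst, GTm.typeof, ihu hu, ihv hD]

lemma headIsLam_subst {x : ℕ} {B : Ty} {s : GTm} :
    ∀ {t : GTm} {C : Ty}, t.typeof = some C →
    (t.subst x B s).headIsLam = true → t.headIsLam = true ∨ C = B := by
  intro t
  induction t with
  | var y D =>
    intro C ht h
    simp [GTm.typeof] at ht
    subst ht
    by_cases hc : y = x ∧ D = B
    · exact Or.inr hc.2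
    · simp [GTm.subst, hc, GTm.headIsLam] at h
  | lam y D u _ => intro C ht h; exact Or.inl rfl
  | app u v _ _ =>
    intro C ht h
    simp [GTm.subst, GTm.headIsLam] at h
  | wrap u v ih _ =>
    intro C ht h
    obtain ⟨hu, _⟩ := typeof_wrap_inv ht
    rcases ih hu h with h' | h'
    · exact Or.inl h'
    · exact Or.inr h'

lemma maxdeg_subst {x : ℕ} {B : Ty} {s : GTm} (hs : s.typeof = some B) :
    ∀ {t : GTm} {C : Ty}, t.typeof = some C →
    (t.subst x B s).maxdeg ≤ max t.maxdeg (max s.maxdeg B.height) := by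
  intro t
  induction t with
  | var y D =>
    intro C ht
    by_cases h : y = x ∧ D = B
    · simp [GTm.subst, h]
    · simp [GTm.subst, h, GTm.maxdeg]
  | lam y D u ih =>
    intro C ht
    obtain ⟨B', hu, hC⟩ := typeof_lam_inv ht
    by_cases h : y = x ∧ D = B
    · simp [GTm.subst, h, GTm.maxdeg]
    · have := ih hu
      simp [GTm.subst, h, GTm.maxdeg] at this ⊢
      omega
  | app u v ihu ihv =>
    intro C ht
    obtain ⟨A, hu, hv⟩ := typeof_app_inv ht
    have h1 := ihu hu
    have h2 := ihv hv
    have hdeg : ((u.subst x B s).mAbsDegree).getD 0 ≤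
        max ((u.mAbsDegree).getD 0) B.height := by
      by_cases hl : (u.subst x B s).headIsLam = true
      · have htyp := typeof_subst (x := x) hs hu
        rcases headIsLam_subst hu hl with h' | h'
        · simp [GTm.mAbsDegree, hl, h', htyp, hu]
        · subst h'
          simp [GTm.mAbsDegree, hl, htyp]
      · simp [GTm.mAbsDegree, hl]
    simp [GTm.subst, GTm.maxdeg] at h1 h2 hdeg ⊢
    omega
  | wrap u v ihu ihv =>
    intro C ht
    obtain ⟨hu, hv⟩ := typeof_wrap_inv ht
    obtain ⟨D, hD⟩ := Option.isSome_iff_exists.mp hv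
    have h1 := ihu hu
    have h2 := ihv hD
    simp [GTm.subst, GTm.maxdeg] at h1 h2 ⊢
    omega

lemma headIsLam_simpD {d : ℕ} : ∀ {t : GTm}, t.headIsLam = true →
    (t.simpD d).headIsLam = true := by
  intro t
  induction t with
  | var y B => intro h; simp [GTm.headIsLam] at h
  | lam y B u _ => intro _; rfl
  | app u v _ _ => intro h; simp [GTm.headIsLam] at h
  | wrap u v ih _ => intro h; exact ih h

lemma headIsLam_of_mAbsDegree {u : GTm} {d : ℕ} (h : u.mAbsDegree = some d) :
    u.headIsLam = true := by
  by_cases hl : u.headIsLam = true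
  · exact hl
  · simp [GTm.mAbsDegree, hl] at h

lemma simpD_app_redex {d : ℕ} {u : GTm} (v : GTm) (h : u.mAbsDegree = some d)
    {x : ℕ} {A : Ty} {b : GTm} {L : List GTm}
    (hd : (u.simpD d).decomp = some ((x, A, b), L)) :
    (GTm.app u v).simpD d =
      GTm.appMem (GTm.wrap (b.subst x A (v.simpD d)) (v.simpD d)) L := by
  simp [GTm.simpD, h, hd]

lemma simpD_app_nonredex {d : ℕ} {u : GTm} (v : GTm) (h : ¬ u.mAbsDegree = some d) :
    (GTm.app u v).simpD d = GTm.app (u.simpD d) (v.simpD d) := by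
  simp [GTm.simpD, h]

lemma typeof_simpD {d : ℕ} : ∀ {t : GTm} {C : Ty}, t.typeof = some C →
    (t.simpD d).typeof = some C := by
  intro t
  induction t with
  | var y B => intro C h; exact h
  | lam y B u ih =>
    intro C h
    obtain ⟨B', hu, hC⟩ := typeof_lam_inv h
    subst hC
    simp [GTm.simpD, GTm.typeof, ih hu]
  | wrap u v ihu ihv =>
    intro C h
    obtain ⟨hu, hv⟩ := typeof_wrap_inv h
    obtain ⟨D, hD⟩ := Option.isSome_iff_exists.mp hv
    simp [GTm.simpD, GTm.typeof, ihu hu, ihv hD]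
  | app u v ihu ihv =>
    intro C h
    obtain ⟨A0, hu, hv⟩ := typeof_app_inv h
    by_cases hc : u.mAbsDegree = some d
    · have hl := headIsLam_simpD (headIsLam_of_mAbsDegree hc) (d := d)
      obtain ⟨⟨⟨x, A, b⟩, L⟩, hdec⟩ := headIsLam_decomp hl
      rw [simpD_app_redex v hc hdec]
      have hdu := decomp_eq hdec
      have hut : (u.simpD d).typeof = some (Ty.arr A0 C) := ihu hu
      rw [hdu] at hut
      obtain ⟨hlam, hLsome⟩ := typeof_appMem_inv L _ hut
      obtain ⟨B', hb, harr⟩ := typeof_lam_inv hlam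
      have hAA : A = A0 ∧ B' = C := by
        cases harr; exact ⟨rfl, rfl⟩
      obtain ⟨hA, hB⟩ := hAA
      subst hA; subst hB
      have hvt : (v.simpD d).typeof = some A := ihv hv
      rw [typeof_appMem_isSome L _ hLsome, typeof_wrap_eq (by simp [hvt]),
        typeof_subst hvt hb]
    · rw [simpD_app_nonredex v hc]
      simp [GTm.typeof, ihu hu, ihv hv]

lemma rtg_lam {x : ℕ} {A : Ty} {t t' : GTm} (h : ReflTransGen GStep t t') :
    ReflTransGen GStep (GTm.lam x A t) (GTm.lam x A t') :=
  ReflTransGen.lift _ (fun _ _ hs => GStep.lam x A hs) _ _ h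

lemma rtg_app {t t' s s' : GTm} (h1 : ReflTransGen GStep t t')
    (h2 : ReflTransGen GStep s s') :
    ReflTransGen GStep (GTm.app t s) (GTm.app t' s') :=
  (ReflTransGen.lift (fun z => GTm.app z s) (fun _ _ hs => GStep.appL s hs) _ _ h1).trans
    (ReflTransGen.lift (fun z => GTm.app t' z) (fun _ _ hs => GStep.appR t' hs) _ _ h2)

lemma rtg_wrap {t t' s s' : GTm} (h1 : ReflTransGen GStep t t')
    (h2 : ReflTransGen GStep s s') :
    ReflTransGen GStep (GTm.wrap t s) (GTm.wrap t' s') :=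
  (ReflTransGen.lift (fun z => GTm.wrap z s) (fun _ _ hs => GStep.wrapL s hs) _ _ h1).trans
    (ReflTransGen.lift (fun z => GTm.wrap t' z) (fun _ _ hs => GStep.wrapR t' hs) _ _ h2)

lemma steps_simpD {d : ℕ} : ∀ t : GTm, ReflTransGen GStep t (t.simpD d) := by
  intro t
  induction t with
  | var y B => exact ReflTransGen.refl
  | lam y B u ih => exact rtg_lam ih
  | wrap u v ihu ihv => exact rtg_wrap ihu ihv
  | app u v ihu ihv =>
    by_cases hc : u.mAbsDegree = some d
    · have hl := headIsLam_simpD (headIsLam_of_mAbsDegree hc) (d := d)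
      obtain ⟨⟨⟨x, A, b⟩, L⟩, hdec⟩ := headIsLam_decomp hl
      rw [simpD_app_redex v hc hdec]
      have hdu := decomp_eq hdec
      refine (rtg_app ihu ihv).trans ?_
      rw [hdu]
      exact ReflTransGen.single (GStep.beta x A b L (v.simpD d))
    · rw [simpD_app_nonredex v hc]
      exact rtg_app ihu ihv

lemma maxdeg_simpD {d : ℕ} (hd1 : 1 ≤ d) : ∀ {t : GTm} {C : Ty},
    t.typeof = some C → t.maxdeg ≤ d →
    (t.simpD d).maxdeg < d ∧
      ((t.simpD d).headIsLam = true → t.headIsLam = true ∨ C.height < d) := by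
  intro t
  induction t with
  | var y B =>
    intro C ht hm
    exact ⟨by simp [GTm.simpD, GTm.maxdeg]; omega, fun h => by simp [GTm.simpD, GTm.headIsLam] at h⟩
  | lam y B u ih =>
    intro C ht hm
    obtain ⟨B', hu, hC⟩ := typeof_lam_inv ht
    obtain ⟨h1, _⟩ := ih hu (by simpa [GTm.maxdeg] using hm)
    exact ⟨by simpa [GTm.simpD, GTm.maxdeg] using h1, fun _ => Or.inl rfl⟩
  | wrap u v ihu ihv =>
    intro C ht hm
    obtain ⟨hu, hv⟩ := typeof_wrap_inv ht
    obtain ⟨D, hD⟩ := Option.isSome_iff_exists.mp hv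
    simp [GTm.maxdeg] at hm
    obtain ⟨h1, c1⟩ := ihu hu hm.1
    obtain ⟨h2, _⟩ := ihv hD hm.2
    refine ⟨by simp [GTm.simpD, GTm.maxdeg]; omega, ?_⟩
    intro h
    have h' : ((u.simpD d)).headIsLam = true := h
    rcases c1 h' with h'' | h''
    · exact Or.inl h''
    · exact Or.inr h''
  | app u v ihu ihv =>
    intro C ht hm
    obtain ⟨A0, hu, hv⟩ := typeof_app_inv ht
    simp [GTm.maxdeg] at hm
    obtain ⟨hmu, hmv, hmdeg⟩ := hm
    obtain ⟨h1, c1⟩ := ihu hu hmu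
    obtain ⟨h2, _⟩ := ihv hv hmv
    by_cases hc : u.mAbsDegree = some d
    · have hlu := headIsLam_of_mAbsDegree hc
      have hl := headIsLam_simpD hlu (d := d)
      obtain ⟨⟨⟨x, A, b⟩, L⟩, hdec⟩ := headIsLam_decomp hl
      rw [simpD_app_redex v hc hdec]
      have hdu := decomp_eq hdec
      have hut : (u.simpD d).typeof = some (Ty.arr A0 C) := typeof_simpD hu
      rw [hdu] at hut
      obtain ⟨hlam, hLsome⟩ := typeof_appMem_inv L _ hut
      obtain ⟨B', hb, harr⟩ := typeof_lam_inv hlam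
      injection harr with hA hB
      subst hA; subst hB
      have hvt : (v.simpD d).typeof = some A0 := typeof_simpD hv
      have hdval : d = (Ty.arr A0 C).height := by
        have : u.mAbsDegree = some (Ty.arr A0 C).height := by
          simp [GTm.mAbsDegree, hlu, hu]
        rw [hc] at this
        exact (Option.some_injective _ this)
      have hA0 : A0.height < d ∧ C.height < d := by
        rw [hdval]; simp [Ty.height]; omega
      have hmb : (GTm.appMem (GTm.lam x A0 b) L).maxdeg < d := by rw [← hdu]; exact h1
      rw [maxdeg_appMem] at hmb ⊢
      simp [GTm.maxdeg] at hmb ⊢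
      have hsub := maxdeg_subst hvt hb (x := x)
      constructor
      · omega
      · intro _; exact Or.inr hA0.2
    · rw [simpD_app_nonredex v hc]
      have hdeg : ((u.simpD d).mAbsDegree).getD 0 < d := by
        by_cases hl : (u.simpD d).headIsLam = true
        · have htyp : (u.simpD d).typeof = some (Ty.arr A0 C) := typeof_simpD hu
          have hval : ((u.simpD d).mAbsDegree).getD 0 = (Ty.arr A0 C).height := by
            simp [GTm.mAbsDegree, hl, htyp]
          rcases c1 hl with h' | h'
          · have humd : u.mAbsDegree = some (Ty.arr A0 C).height := by
              simp [GTm.mAbsDegree, h', hu]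
            have hne : (Ty.arr A0 C).height ≠ d := by
              intro he; exact hc (by rw [humd, he])
            have hle : (Ty.arr A0 C).height ≤ d := by
              rw [humd] at hmdeg; simpa using hmdeg
            omega
          · rw [hval]; simp [Ty.height]; simp [Ty.height] at h'; omega
        · simp [GTm.mAbsDegree, hl]; omega
      refine ⟨by simp [GTm.maxdeg]; omega, ?_⟩
      intro h
      simp [GTm.headIsLam] at h

lemma no_step_of_maxdeg_zero : ∀ {t s : GTm}, GStep t s →
    ∀ {C : Ty}, t.typeof = some C → t.maxdeg = 0 → False := by
  intro t s h
  induction h with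
  | beta x A b L v =>
    intro C ht hm
    obtain ⟨A0, hu, _⟩ := typeof_app_inv ht
    have hl : (GTm.appMem (GTm.lam x A b) L).headIsLam = true := by
      rw [headIsLam_appMem]; rfl
    have : (GTm.appMem (GTm.lam x A b) L).mAbsDegree = some (Ty.arr A0 C).height := by
      simp [GTm.mAbsDegree, hl, hu]
    simp [GTm.maxdeg, this, Ty.height] at hm
  | lam x A h ih =>
    intro C ht hm
    obtain ⟨B, hu, _⟩ := typeof_lam_inv ht
    exact ih hu (by simpa [GTm.maxdeg] using hm)
  | appL v h ih =>
    intro C ht hm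
    obtain ⟨A0, hu, _⟩ := typeof_app_inv ht
    simp [GTm.maxdeg] at hm
    exact ih hu hm.1
  | appR u h ih =>
    intro C ht hm
    obtain ⟨A0, _, hv⟩ := typeof_app_inv ht
    simp [GTm.maxdeg] at hm
    exact ih hv hm.2.1
  | wrapL v h ih =>
    intro C ht hm
    obtain ⟨hu, _⟩ := typeof_wrap_inv ht
    simp [GTm.maxdeg] at hm
    exact ih hu hm.1
  | wrapR u h ih =>
    intro C ht hm
    obtain ⟨_, hv⟩ := typeof_wrap_inv ht
    obtain ⟨D, hD⟩ := Option.isSome_iff_exists.mp hv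
    simp [GTm.maxdeg] at hm
    exact ih hD hm.2

lemma simpDown_spec : ∀ (n : ℕ) {t : GTm} {C : Ty}, t.typeof = some C →
    t.maxdeg ≤ n →
    ReflTransGen GStep t (GTm.simpDown n t) ∧
      (GTm.simpDown n t).typeof = some C ∧ (GTm.simpDown n t).maxdeg = 0 := by
  intro n
  induction n with
  | zero =>
    intro t C ht hm
    exact ⟨ReflTransGen.refl, ht, Nat.le_zero.mp hm⟩
  | succ n ih =>
    intro t C ht hm
    have h1 := steps_simpD (d := n + 1) t
    have h2 := typeof_simpD (d := n + 1) ht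
    obtain ⟨h3, _⟩ := maxdeg_simpD (d := n + 1) (Nat.succ_le_succ (Nat.zero_le n)) ht hm
    obtain ⟨ha, hb, hc⟩ := ih h2 (Nat.lt_succ_iff.mp h3)
    exact ⟨h1.trans ha, hb, hc⟩

/-- The full simplification of a typable term is a normal form reachable from it. -/
theorem simpfull_normalizes {Γ : ℕ → Option Ty} {t : GTm} {A : Ty}
    (ht : GHasType Γ t A) :
    Relation.ReflTransGen GStep t t.simpfull ∧ ∀ s, ¬ GStep t.simpfull s := by
  have hC := typeof_of_hasType ht
  obtain ⟨h1, h2, h3⟩ := simpDown_spec t.maxdeg hC le_rfl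
  exact ⟨h1, fun s hs => no_step_of_maxdeg_zero hs h2 h3⟩

end LambdaG
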